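/- The up-down Markov chain on 𝒯_n satisfies DU_n = (1/C(n+1,2)) · A P G A^{-1}, where A is the diagonal operator on ℂ𝒯_n sending t to m(t)·t; equivalently, for all t, t' ∈ 𝒯_n, DU_n(t,t') = (m(t') / (C(n+1,2) m(t))) · Σ_{s: s ⋗ t and s ⋗ t'} n(t,s) m(t',s). -/

import Mathlib

/-!
Common definitions: rooted unlabeled trees on `n` vertices, the growth/pruning
coefficients `n(t,t')` and `m(t,t')`, the measure `π_n`, the up/down transition
probabilities, the down-up and up-down Markov chains, and separation distance.

A rooted tree is represented as `PreTree.node cs` where `cs` is the list of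
subtrees of the root's children.  An *unlabeled* rooted tree is represented by
its canonical representative (children recursively sorted by an injective
encoding into `ℕ`), and `trees n` is the finite set of canonical rooted trees
on `n` vertices.
-/

namespace RootedTreeChain

inductive PreTree : Type where
  | node : List PreTree → PreTree

namespace PreTree

/- Number of vertices. -/
mutual
  def size : PreTree → ℕ
    | .node cs => 1 + sizeList cs
  def sizeList : List PreTree → ℕ
    | [] => 0
    | t :: ts => size t + sizeList ts
end

mutual
def deq : (a b : PreTree) → Decidable (a = b)
  | .node cs, .node ds =>
    match deqList cs ds with
    | isTrue h => isTrue (by rw [h])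
    | isFalse h => isFalse (by intro hh; cases hh; exact h rfl)
def deqList : (as bs : List PreTree) → Decidable (as = bs)
  | [], [] => isTrue rfl
  | [], _ :: _ => isFalse (by simp)
  | _ :: _, [] => isFalse (by simp)
  | a :: as, b :: bs =>
    match deq a b, deqList as bs with
    | isTrue h1, isTrue h2 => isTrue (by rw [h1, h2])
    | isFalse h1, _ => isFalse (by intro hh; injection hh; contradiction)
    | _, isFalse h2 => isFalse (by intro hh; injection hh; contradiction)
end

instance : DecidableEq PreTree := deq

/- An injective encoding of trees into `ℕ`, used only to sort children
so that each unlabeled rooted tree has a unique canonical representative. -/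
mutual
  def enc : PreTree → ℕ
    | .node cs => encList cs
  def encList : List PreTree → ℕ
    | [] => 0
    | t :: ts => Nat.pair (enc t) (encList ts) + 1
end

/- Canonical representative of the isomorphism class of a rooted tree:
recursively sort the children by their encoding. -/
mutual
  def canon : PreTree → PreTree
    | .node cs => .node ((canonList cs).mergeSort (fun a b => enc a ≤ enc b))
  def canonList : List PreTree → List PreTree
    | [] => []
    | t :: ts => canon t :: canonList ts
end

/-- The one-vertex rooted tree `•`. -/
def leaf : PreTree := .node []

/- The addresses (paths of child indices from the root) of all vertices. -/
mutual
  def positions : PreTree → List (List ℕ)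
    | .node cs => [] :: positionsList 0 cs
  def positionsList : ℕ → List PreTree → List (List ℕ)
    | _, [] => []
    | i, t :: ts => (positions t).map (fun p => i :: p) ++ positionsList (i + 1) ts
end

/- The addresses of all terminal vertices (vertices with no outgoing edge). -/
mutual
  def termPositions : PreTree → List (List ℕ)
    | .node [] => [[]]
    | .node (c :: cs) => termPositionsList 0 (c :: cs)
  def termPositionsList : ℕ → List PreTree → List (List ℕ)
    | _, [] => []
    | i, t :: ts => (termPositions t).map (fun p => i :: p) ++ termPositionsList (i + 1) ts
end

/- Attach a new terminal vertex by an edge to the vertex at address `p`. -/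
mutual
  def addLeafAt : PreTree → List ℕ → PreTree
    | .node cs, [] => .node (cs ++ [leaf])
    | .node cs, i :: p => .node (addLeafAtList cs i p)
  def addLeafAtList : List PreTree → ℕ → List ℕ → List PreTree
    | [], _, _ => []
    | t :: ts, 0, p => addLeafAt t p :: ts
    | t :: ts, i + 1, p => t :: addLeafAtList ts i p
end

/- Remove the (terminal) vertex at address `p` together with the edge into it. -/
mutual
  def removeAt : PreTree → List ℕ → PreTree
    | .node cs, [] => .node cs
    | .node cs, [i] => .node (cs.eraseIdx i)
    | .node cs, i :: p => .node (removeAtList cs i p)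
  def removeAtList : List PreTree → ℕ → List ℕ → List PreTree
    | [], _, _ => []
    | t :: ts, 0, p => removeAt t p :: ts
    | t :: ts, i + 1, p => t :: removeAtList ts i p
end

/-- For `s ↗ t` (and more generally any `s, t` with `size t = size s + 1`),
`ncoef s t` is `n(s,t)`: the number of vertices of `s` to which a new edge can
be added to obtain `t`. -/
def ncoef (s t : PreTree) : ℕ :=
  ((positions s).filter (fun p => canon (addLeafAt s p) = t)).length

/-- For `s ↗ t`, `mcoef s t` is `m(s,t)`: the number of edges of `t` (into a
terminal vertex) which when removed give `s`. -/
def mcoef (s t : PreTree) : ℕ :=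
  ((termPositions t).filter (fun p => canon (removeAt t p) = s)).length

/-- The list of all (canonical representatives of) rooted unlabeled trees on
`n` vertices: every tree on `n+1 ≥ 2` vertices is obtained by attaching a new
terminal vertex to a tree on `n` vertices. -/
def treeList : ℕ → List PreTree
  | 0 => []
  | 1 => [leaf]
  | n + 2 =>
      ((treeList (n + 1)).flatMap
        (fun t => (positions t).map (fun p => canon (addLeafAt t p)))).dedup

/-- The set `𝒯_n` of rooted unlabeled trees on `n` vertices. -/
def trees (n : ℕ) : Finset PreTree := (treeList n).toFinset

/-- `T_n = |𝒯_n|`, the number of rooted unlabeled trees on `n` vertices. -/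
def T (n : ℕ) : ℕ := (trees n).card

/-- Generalized growth coefficients: `nGen k t t'` is the coefficient `n(t,t')`
of `t'` in `G^k(t)` (for `size t' = size t + k`). -/
def nGen : ℕ → PreTree → PreTree → ℕ
  | 0, t, t' => if t = t' then 1 else 0
  | k + 1, t, t' => ((treeList (t.size + k)).map (fun s => nGen k t s * ncoef s t')).sum

/-- Generalized pruning coefficients: `mGen k t t'` is the coefficient `m(t,t')`
of `t` in `P^k(t')` (for `size t' = size t + k`). -/
def mGen : ℕ → PreTree → PreTree → ℕ
  | 0, t, t' => if t = t' then 1 else 0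
  | k + 1, t, t' => ((treeList (t'.size - 1)).map (fun s => mcoef s t' * mGen k t s)).sum

/-- `m(t) = m(•,t)`, the number of ways to take `t` apart by sequentially
removing terminal edges. -/
def mWt (t : PreTree) : ℕ := mGen (t.size - 1) leaf t

/-- `n(t) = n(•,t)`, the number of ways to build `t` up from `•`. -/
def nWt (t : PreTree) : ℕ := nGen (t.size - 1) leaf t

/-- The measure `π_n(t) = m(t) n(t) / ∏_{i=2}^n C(i,2)` on `𝒯_n`. -/
def piM (n : ℕ) (t : PreTree) : ℚ :=
  (mWt t * nWt t : ℚ) / ∏ i ∈ Finset.Icc 2 n, (Nat.choose i 2 : ℚ)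

/-- Upward transition probability `P_u(s,t) = m(s,t) n(t) / (C(n,2) n(s))`
from `s ∈ 𝒯_{n-1}` to `t ∈ 𝒯_n`. -/
def Pu (n : ℕ) (s t : PreTree) : ℚ :=
  (mcoef s t : ℚ) * (nWt t : ℚ) / ((Nat.choose n 2 : ℚ) * (nWt s : ℚ))

/-- Downward transition probability `P_d(t,s) = m(s,t) m(s) / m(t)`
from `t ∈ 𝒯_n` to `s ∈ 𝒯_{n-1}`. -/
def Pd (t s : PreTree) : ℚ :=
  (mcoef s t : ℚ) * (mWt s : ℚ) / (mWt t : ℚ)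

/-- The down-up Markov chain on `𝒯_n`:
`K(t,t') = Σ_{s : s ↗ t, s ↗ t'} P_d(t,s) P_u(s,t')`.  (The sum may be taken
over all `s ∈ 𝒯_{n-1}` since the summand vanishes unless `s ↗ t` and `s ↗ t'`.) -/
def K (n : ℕ) (t t' : PreTree) : ℚ :=
  ∑ s ∈ trees (n - 1), Pd t s * Pu n s t'

/-- `r`-step transition probabilities `K^r(t,t')` of the down-up chain. -/
def Kpow (n : ℕ) : ℕ → PreTree → PreTree → ℚ
  | 0, t, t' => if t = t' then 1 else 0
  | r + 1, t, t' => ∑ s ∈ trees n, K n t s * Kpow n r s t'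

/-- The up-down Markov chain on `𝒯_n`:
`DU_n(t,t') = Σ_{s : s ⋗ t, s ⋗ t'} P_u(t,s) P_d(s,t')`. -/
def DU (n : ℕ) (t t' : PreTree) : ℚ :=
  ∑ s ∈ trees (n + 1), Pu (n + 1) t s * Pd s t'

/-- `r`-step transition probabilities of the up-down chain. -/
def DUpow (n : ℕ) : ℕ → PreTree → PreTree → ℚ
  | 0, t, t' => if t = t' then 1 else 0
  | r + 1, t, t' => ∑ s ∈ trees n, DU n t s * DUpow n r s t'

/-- Maximal separation distance `s^*(r) = max_{t,t' ∈ 𝒯_n} [1 - K^r(t,t')/π_n(t')]`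
of the down-up chain on `𝒯_n`. -/
noncomputable def sStar (n r : ℕ) : ℝ :=
  sSup {x : ℝ | ∃ t ∈ trees n, ∃ t' ∈ trees n,
    x = 1 - (Kpow n r t t' : ℝ) / (piM n t' : ℝ)}

/-- Maximal separation distance of the up-down chain on `𝒯_n`. -/
noncomputable def sStarDU (n r : ℕ) : ℝ :=
  sSup {x : ℝ | ∃ t ∈ trees n, ∃ t' ∈ trees n,
    x = 1 - (DUpow n r t t' : ℝ) / (piM n t' : ℝ)}

/-- The path on `n` vertices (rooted at an end): the unique rooted tree on
`n ≥ 2` vertices with exactly one terminal vertex. -/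
def pathTree : ℕ → PreTree
  | 0 => leaf
  | 1 => leaf
  | n + 2 => .node [pathTree (n + 1)]

/-- The star on `n` vertices (rooted at the center): the unique rooted tree on
`n` vertices with `n-1` terminal vertices. -/
def starTree (n : ℕ) : PreTree := .node (List.replicate (n - 1) leaf)


/- The order of the symmetry group `SG(t) = ∏_{v ∈ t} SG(t,v)`, where for a
vertex `v` with children `v_1, …, v_k`, `SG(t,v)` is generated by the
permutations exchanging isomorphic subtrees rooted at the `v_i`. -/
mutual
  def sgOrder : PreTree → ℕ
    | .node cs => sgOrderList cs *
        ((canonList cs).dedup.map (fun c => Nat.factorial ((canonList cs).count c))).prod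
  def sgOrderList : List PreTree → ℕ
    | [] => 1
    | t :: ts => sgOrder t * sgOrderList ts
end

/- `hProd t = ∏_{v ∈ t} h(v)`, the product over all vertices `v` of `t` of the
number `h(v)` of vertices of the subtree rooted at `v`. -/
mutual
  def hProd : PreTree → ℕ
    | .node cs => size (.node cs) * hProdList cs
  def hProdList : List PreTree → ℕ
    | [] => 1
    | t :: ts => hProd t * hProdList ts
end

/-- The matrix entry of `G P : ℂ𝒯_n → ℂ𝒯_n`: the coefficient of `t'` in `G(P(t))`. -/
def gpEntry (n : ℕ) (t t' : PreTree) : ℕ :=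
  ∑ s ∈ trees (n - 1), mcoef s t * ncoef s t'

/-- The matrix entry of `(G P)^l : ℂ𝒯_n → ℂ𝒯_n`: the coefficient of `t'` in `(GP)^l(t)`. -/
def gpPow (n : ℕ) : ℕ → PreTree → PreTree → ℕ
  | 0, t, t' => if t = t' then 1 else 0
  | l + 1, t, t' => ∑ u ∈ trees n, gpPow n l t u * gpEntry n u t'

end PreTree


namespace PreTree

theorem size_node (cs : List PreTree) : size (node cs) = 1 + sizeList cs := by simp [size]

theorem sizeList_nil : sizeList [] = 0 := by simp [sizeList]

theorem sizeList_cons (c : PreTree) (cs : List PreTree) :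
    sizeList (c :: cs) = size c + sizeList cs := by simp [sizeList]

theorem sizeList_eq_sum (l : List PreTree) : sizeList l = (l.map size).sum := by
  induction l with
  | nil => simp [sizeList_nil]
  | cons t ts ih => simp [sizeList_cons, ih]

theorem one_le_size (t : PreTree) : 1 ≤ size t := by
  cases t with
  | node cs => rw [size_node]; omega

theorem canon_node (cs : List PreTree) :
    canon (node cs) = node ((canonList cs).mergeSort (fun a b => enc a ≤ enc b)) := by
  simp [canon]

theorem canonList_eq_map (l : List PreTree) : canonList l = l.map canon := by
  induction l with
  | nil => simp [canonList]
  | cons t ts ih => simp [canonList, ih]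

theorem encList_cons (t : PreTree) (ts : List PreTree) :
    encList (t :: ts) = Nat.pair (enc t) (encList ts) + 1 := by simp [encList]

theorem encList_nil : encList [] = 0 := by simp [encList]

theorem enc_node (cs : List PreTree) : enc (node cs) = encList cs := by simp [enc]

theorem canon_leaf : canon leaf = leaf := by
  simp [leaf, canon, canonList, List.mergeSort]

theorem size_leaf : size leaf = 1 := by simp [leaf, size, sizeList]

mutual
theorem enc_inj : (a : PreTree) → (b : PreTree) → enc a = enc b → a = b
  | .node cs, .node ds, h => by
    rw [enc_node, enc_node] at h
    rw [encList_inj cs ds h]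
theorem encList_inj : (as : List PreTree) → (bs : List PreTree) → encList as = encList bs → as = bs
  | [], [], _ => rfl
  | [], b :: bs, h => by rw [encList_nil, encList_cons] at h; omega
  | a :: as, [], h => by rw [encList_nil, encList_cons] at h; omega
  | a :: as, b :: bs, h => by
    rw [encList_cons, encList_cons] at h
    have h2 : Nat.pair (enc a) (encList as) = Nat.pair (enc b) (encList bs) := by omega
    have h3 := Nat.pair_eq_pair.mp h2
    rw [enc_inj a b h3.1, encList_inj as bs h3.2]
end

/-- The sorting function used by `canon`. -/
def sortT (l : List PreTree) : List PreTree := l.mergeSort (fun a b => enc a ≤ enc b)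

theorem canon_node' (cs : List PreTree) : canon (node cs) = node (sortT (cs.map canon)) := by
  rw [canon_node, canonList_eq_map, sortT]

/-- The order relation used for canonicalization. -/
def encle (a b : PreTree) : Prop := enc a ≤ enc b

instance : IsAntisymm PreTree encle :=
  ⟨fun a b h1 h2 => enc_inj a b (Nat.le_antisymm h1 h2)⟩

theorem sortT_perm (l : List PreTree) : List.Perm (sortT l) l := List.mergeSort_perm l _

theorem sortT_sorted (l : List PreTree) : (sortT l).Pairwise encle := by
  have h := List.pairwise_mergeSort (le := fun a b => decide (enc a ≤ enc b))
    (fun a b c h1 h2 => by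
      simp only [decide_eq_true_eq] at *; omega)
    (fun a b => by simp only [Bool.or_eq_true, decide_eq_true_eq]; omega) l
  refine List.Pairwise.imp (fun {a b} hab => ?_) h
  simpa [encle] using hab

theorem sortT_eq_of_sorted {l : List PreTree} (h : l.Pairwise encle) : sortT l = l :=
  List.Perm.eq_of_pairwise (fun a b _ _ h1 h2 => enc_inj a b (Nat.le_antisymm h1 h2))
    (sortT_sorted l) h (sortT_perm l)

theorem sortT_eq_sortT_of_perm {l l' : List PreTree} (h : List.Perm l l') : sortT l = sortT l' :=
  List.Perm.eq_of_pairwise (fun a b _ _ h1 h2 => enc_inj a b (Nat.le_antisymm h1 h2))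
    (sortT_sorted l) (sortT_sorted l') ((sortT_perm l).trans (h.trans (sortT_perm l').symm))

mutual
theorem canon_canon : (t : PreTree) → canon (canon t) = canon t
  | .node cs => by
    rw [canon_node', canon_node']
    have h1 : (sortT (cs.map canon)).map canon = sortT (cs.map canon) := by
      have : (sortT (cs.map canon)).map canon = (sortT (cs.map canon)).map id := by
        apply List.map_congr_left
        intro c hc
        have hm : c ∈ cs.map canon := (sortT_perm _).mem_iff.mp hc
        obtain ⟨d, hd, rfl⟩ := List.mem_map.mp hm
        exact canonList_canon cs d hd
      simpa using this
    rw [h1, sortT_eq_of_sorted (sortT_sorted _)]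
theorem canonList_canon : (l : List PreTree) → (d : PreTree) → d ∈ l → canon (canon d) = canon d
  | d :: ds, e, he => by
    cases he with
    | head => exact canon_canon d
    | tail _ h => exact canonList_canon ds e h
end

/-- `t` is a canonical representative. -/
def Canonical (t : PreTree) : Prop := canon t = t

theorem canonical_canon (t : PreTree) : Canonical (canon t) := canon_canon t

theorem canonical_leaf : Canonical leaf := canon_leaf

theorem Canonical.children {cs : List PreTree} (h : Canonical (node cs)) :
    ∀ c ∈ cs, Canonical c := by
  intro c hc
  have h' : sortT (cs.map canon) = cs := by
    have := h; rwa [Canonical, canon_node', node.injEq] at this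
  have hmem : c ∈ cs.map canon := by
    rw [← h'] at hc
    exact (sortT_perm _).mem_iff.mp hc
  obtain ⟨d, hd, rfl⟩ := List.mem_map.mp hmem
  exact canon_canon d

theorem map_canon_of_canonical {cs : List PreTree} (h : ∀ c ∈ cs, Canonical c) :
    cs.map canon = cs := by
  have : cs.map canon = cs.map id := List.map_congr_left (fun c hc => h c hc)
  simpa using this

/-- Key lemma: for canonical `node ds`, `canon (node X) = node ds` iff the canonized
children of `X` form the same multiset as `ds`. -/
theorem canon_node_eq_iff {ds : List PreTree} (hds : Canonical (node ds)) (X : List PreTree) :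
    canon (node X) = node ds ↔ (↑(X.map canon) : Multiset PreTree) = ↑ds := by
  have hds' : sortT (ds.map canon) = ds := by
    have := hds; rwa [Canonical, canon_node', node.injEq] at this
  have hdss : ds.Pairwise encle := by rw [← hds']; exact sortT_sorted _
  rw [canon_node', node.injEq, Multiset.coe_eq_coe]
  constructor
  · intro h
    rw [← h]
    exact (sortT_perm _).symm
  · intro h
    exact List.Perm.eq_of_pairwise (fun a b _ _ h1 h2 => enc_inj a b (Nat.le_antisymm h1 h2))
      (sortT_sorted _) hdss ((sortT_perm _).trans h)

mutual
theorem size_canon : (t : PreTree) → size (canon t) = size t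
  | .node cs => by
    rw [canon_node', size_node, size_node, sizeList_eq_sum, sizeList_eq_sum]
    have hperm : List.Perm ((sortT (cs.map canon)).map size) ((cs.map canon).map size) :=
      (sortT_perm (cs.map canon)).map size
    rw [hperm.sum_eq, List.map_map]
    have heq : List.map (size ∘ canon) cs = List.map size cs :=
      List.map_congr_left (fun c hc => sizeList_size_canon cs c hc)
    rw [heq]
theorem sizeList_size_canon : (l : List PreTree) → (d : PreTree) → d ∈ l →
    size (canon d) = size d
  | d :: ds, e, he => by
    cases he with
    | head => exact size_canon d
    | tail _ h => exact sizeList_size_canon ds e h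
end

end PreTree

namespace PreTree

/- Equation lemmas for positions / addLeafAt / termPositions / removeAt. -/

theorem positions_node (cs : List PreTree) :
    positions (node cs) = [] :: positionsList 0 cs := by simp [positions]

theorem positionsList_nil (i : ℕ) : positionsList i ([] : List PreTree) = [] := by
  simp [positionsList]

theorem positionsList_cons (i : ℕ) (t : PreTree) (ts : List PreTree) :
    positionsList i (t :: ts)
      = (positions t).map (fun p => i :: p) ++ positionsList (i + 1) ts := by
  simp [positionsList]

theorem addLeafAt_nil (cs : List PreTree) :
    addLeafAt (node cs) [] = node (cs ++ [leaf]) := by simp [addLeafAt]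

theorem addLeafAt_cons (cs : List PreTree) (i : ℕ) (p : List ℕ) :
    addLeafAt (node cs) (i :: p) = node (addLeafAtList cs i p) := by simp [addLeafAt]

theorem addLeafAtList_zero (t : PreTree) (ts : List PreTree) (p : List ℕ) :
    addLeafAtList (t :: ts) 0 p = addLeafAt t p :: ts := by simp [addLeafAtList]

theorem addLeafAtList_succ (t : PreTree) (ts : List PreTree) (i : ℕ) (p : List ℕ) :
    addLeafAtList (t :: ts) (i + 1) p = t :: addLeafAtList ts i p := by simp [addLeafAtList]

theorem addLeafAtList_append (pre : List PreTree) (c : PreTree) (cs : List PreTree) (p : List ℕ) :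
    addLeafAtList (pre ++ c :: cs) pre.length p = pre ++ addLeafAt c p :: cs := by
  induction pre with
  | nil => simp [addLeafAtList_zero]
  | cons a pre ih => simpa [addLeafAtList_succ] using ih

theorem termPositions_leaf : termPositions leaf = [[]] := by simp [leaf, termPositions]

theorem termPositions_node_cons (c : PreTree) (cs : List PreTree) :
    termPositions (node (c :: cs)) = termPositionsList 0 (c :: cs) := by
  simp [termPositions]

theorem termPositionsList_nil (i : ℕ) : termPositionsList i ([] : List PreTree) = [] := by
  simp [termPositionsList]

theorem termPositionsList_cons (i : ℕ) (t : PreTree) (ts : List PreTree) :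
    termPositionsList i (t :: ts)
      = (termPositions t).map (fun p => i :: p) ++ termPositionsList (i + 1) ts := by
  simp [termPositionsList]

theorem ne_nil_of_mem_termPositionsList :
    ∀ (L : List PreTree) (i : ℕ) (q : List ℕ), q ∈ termPositionsList i L → q ≠ [] := by
  intro L
  induction L with
  | nil => intro i q hq; rw [termPositionsList_nil] at hq; cases hq
  | cons c cs ih =>
    intro i q hq
    rw [termPositionsList_cons, List.mem_append] at hq
    rcases hq with hq | hq
    · obtain ⟨p, _, rfl⟩ := List.mem_map.mp hq
      simp
    · exact ih (i + 1) q hq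

theorem ne_nil_of_mem_termPositions {c : PreTree} (hc : c ≠ leaf) {q : List ℕ}
    (hq : q ∈ termPositions c) : q ≠ [] := by
  obtain ⟨cl⟩ := c
  cases cl with
  | nil => exact absurd rfl hc
  | cons x xs =>
    rw [termPositions_node_cons] at hq
    exact ne_nil_of_mem_termPositionsList _ 0 q hq

theorem removeAt_single (cs : List PreTree) (i : ℕ) :
    removeAt (node cs) [i] = node (cs.eraseIdx i) := by simp [removeAt]

theorem removeAt_cons (cs : List PreTree) (i : ℕ) (p : List ℕ) (hp : p ≠ []) :
    removeAt (node cs) (i :: p) = node (removeAtList cs i p) := by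
  cases p with
  | nil => exact absurd rfl hp
  | cons a q => simp [removeAt]

theorem removeAtList_zero (t : PreTree) (ts : List PreTree) (p : List ℕ) :
    removeAtList (t :: ts) 0 p = removeAt t p :: ts := by simp [removeAtList]

theorem removeAtList_succ (t : PreTree) (ts : List PreTree) (i : ℕ) (p : List ℕ) :
    removeAtList (t :: ts) (i + 1) p = t :: removeAtList ts i p := by simp [removeAtList]

theorem removeAtList_append (pre : List PreTree) (c : PreTree) (cs : List PreTree) (p : List ℕ) :
    removeAtList (pre ++ c :: cs) pre.length p = pre ++ removeAt c p :: cs := by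
  induction pre with
  | nil => simp [removeAtList_zero]
  | cons a pre ih => simpa [removeAtList_succ] using ih

theorem eraseIdx_append (pre : List PreTree) (c : PreTree) (cs : List PreTree) :
    (pre ++ c :: cs).eraseIdx pre.length = pre ++ cs := by
  induction pre with
  | nil => simp
  | cons a pre ih => simpa using ih

/- The multiset of children of the ambient list, with the `i`-th element removed. -/

theorem coe_middle (pre : List PreTree) (c : PreTree) (cs : List PreTree) :
    (↑(pre ++ c :: cs) : Multiset PreTree) = c ::ₘ (↑(pre ++ cs) : Multiset PreTree) := by
  rw [← Multiset.coe_add, ← Multiset.coe_add, ← Multiset.cons_coe, Multiset.add_cons]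

theorem erase_middle (pre : List PreTree) (c : PreTree) (cs : List PreTree) :
    ((↑(pre ++ c :: cs) : Multiset PreTree)).erase c = ↑(pre ++ cs) := by
  rw [coe_middle, Multiset.erase_cons_head]

open scoped Classical in
/-- Local growth contribution of a child `c` of a tree with children `M`, toward a target
tree with children `D`. -/
noncomputable def gAdd (M D : Multiset PreTree) (c : PreTree) : ℕ :=
  if h : ∃ x, M.erase c + {x} = D then ncoef c h.choose else 0

theorem gAdd_eq {M D : Multiset PreTree} {c x : PreTree} (h : M.erase c + {x} = D) :
    gAdd M D c = ncoef c x := by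
  have hex : ∃ x, M.erase c + {x} = D := ⟨x, h⟩
  rw [gAdd, dif_pos hex]
  have hs := hex.choose_spec
  have : M.erase c + {hex.choose} = M.erase c + {x} := hs.trans h.symm
  have := add_left_cancel this
  rw [Multiset.singleton_inj.mp this]

theorem gAdd_eq_zero {M D : Multiset PreTree} {c : PreTree}
    (h : ¬ ∃ x, M.erase c + {x} = D) : gAdd M D c = 0 := by
  rw [gAdd, dif_neg h]

open scoped Classical in
/-- Local pruning contribution of a child `d` of a tree with children `D`, toward a target
tree with children `Mt`. -/
noncomputable def gRem (D Mt : Multiset PreTree) (d : PreTree) : ℕ :=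
  if d = leaf then (if D.erase leaf = Mt then 1 else 0)
  else if h : ∃ y, D.erase d + {y} = Mt then mcoef h.choose d else 0

theorem gRem_leaf (D Mt : Multiset PreTree) :
    gRem D Mt leaf = if D.erase leaf = Mt then 1 else 0 := by
  rw [gRem, if_pos rfl]

theorem gRem_eq {D Mt : Multiset PreTree} {d y : PreTree} (hd : d ≠ leaf)
    (h : D.erase d + {y} = Mt) : gRem D Mt d = mcoef y d := by
  have hex : ∃ y, D.erase d + {y} = Mt := ⟨y, h⟩
  rw [gRem, if_neg hd, dif_pos hex]
  have hs := hex.choose_spec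
  have : D.erase d + {hex.choose} = D.erase d + {y} := hs.trans h.symm
  have := add_left_cancel this
  rw [Multiset.singleton_inj.mp this]

theorem gRem_eq_zero {D Mt : Multiset PreTree} {d : PreTree} (hd : d ≠ leaf)
    (h : ¬ ∃ y, D.erase d + {y} = Mt) : gRem D Mt d = 0 := by
  rw [gRem, if_neg hd, dif_neg h]

end PreTree

namespace PreTree

theorem canonical_mem_append_left {pre L : List PreTree} (h : ∀ c ∈ pre ++ L, Canonical c) :
    ∀ c ∈ pre, Canonical c := fun c hc => h c (List.mem_append_left _ hc)

theorem count_addList {ds : List PreTree} (hds : Canonical (node ds)) :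
    ∀ (L pre W : List PreTree), W = pre ++ L → (∀ c ∈ W, Canonical c) →
    ((positionsList pre.length L).filter
        (fun q => canon (addLeafAt (node W) q) = node ds)).length
      = (L.map (gAdd (↑W) (↑ds))).sum := by
  intro L
  induction L with
  | nil => intro pre W _ _; simp [positionsList_nil]
  | cons c cs ih =>
    intro pre W hW hcan
    subst hW
    have hcpre : ∀ x ∈ pre, Canonical x :=
      fun x hx => hcan x (List.mem_append_left _ hx)
    have hccs : ∀ x ∈ cs, Canonical x :=
      fun x hx => hcan x (List.mem_append_right _ (List.mem_cons_of_mem _ hx))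
    have hE : ((↑(pre ++ c :: cs) : Multiset PreTree)).erase c = ↑(pre ++ cs) :=
      erase_middle pre c cs
    rw [positionsList_cons, List.filter_append, List.length_append]
    have htail : ((positionsList (pre.length + 1) cs).filter
        (fun q => canon (addLeafAt (node (pre ++ c :: cs)) q) = node ds)).length
        = (cs.map (gAdd (↑(pre ++ c :: cs)) (↑ds))).sum := by
      have := ih (pre ++ [c]) (pre ++ c :: cs) (by simp) hcan
      simpa using this
    have hiff : ∀ p ∈ positions c,
        (canon (addLeafAt (node (pre ++ c :: cs)) (pre.length :: p)) = node ds)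
        ↔ (canon (addLeafAt c p) ::ₘ (↑(pre ++ cs) : Multiset PreTree) = ↑ds) := by
      intro p _
      rw [addLeafAt_cons, addLeafAtList_append, canon_node_eq_iff hds,
        List.map_append, List.map_cons, map_canon_of_canonical hcpre,
        map_canon_of_canonical hccs, coe_middle]
    have hhead : (((positions c).map (fun p => pre.length :: p)).filter
        (fun q => canon (addLeafAt (node (pre ++ c :: cs)) q) = node ds)).length
        = gAdd (↑(pre ++ c :: cs)) (↑ds) c := by
      rw [List.filter_map, List.length_map]
      by_cases hx : ∃ x, ((↑(pre ++ c :: cs) : Multiset PreTree)).erase c + {x} = ↑ds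
      · obtain ⟨x, hx'⟩ := hx
        rw [gAdd_eq hx']
        rw [hE] at hx'
        have hx'' : x ::ₘ (↑(pre ++ cs) : Multiset PreTree) = ↑ds := by
          rw [← Multiset.singleton_add, add_comm]; exact hx'
        show _ = ((positions c).filter (fun p => canon (addLeafAt c p) = x)).length
        congr 1
        apply List.filter_congr
        intro p hp
        simp only [Function.comp_apply, decide_eq_decide]
        rw [hiff p hp, ← hx'', Multiset.cons_inj_left]
      · rw [gAdd_eq_zero hx]
        rw [List.length_eq_zero_iff, List.filter_eq_nil_iff]
        intro p hp hcontra
        simp only [Function.comp_apply, decide_eq_true_eq] at hcontra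
        rw [hiff p hp] at hcontra
        exact hx ⟨canon (addLeafAt c p), by
          rw [hE, add_comm]; rw [← Multiset.singleton_add] at hcontra; exact hcontra⟩
    rw [hhead, htail, List.map_cons, List.sum_cons]

theorem count_remList {es : List PreTree} (hes : Canonical (node es)) :
    ∀ (L pre W : List PreTree), W = pre ++ L → (∀ c ∈ W, Canonical c) →
    ((termPositionsList pre.length L).filter
        (fun q => canon (removeAt (node W) q) = node es)).length
      = (L.map (gRem (↑W) (↑es))).sum := by
  intro L
  induction L with
  | nil => intro pre W _ _; simp [termPositionsList_nil]
  | cons c cs ih =>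
    intro pre W hW hcan
    subst hW
    have hcpre : ∀ x ∈ pre, Canonical x :=
      fun x hx => hcan x (List.mem_append_left _ hx)
    have hccs : ∀ x ∈ cs, Canonical x :=
      fun x hx => hcan x (List.mem_append_right _ (List.mem_cons_of_mem _ hx))
    have hE : ((↑(pre ++ c :: cs) : Multiset PreTree)).erase c = ↑(pre ++ cs) :=
      erase_middle pre c cs
    rw [termPositionsList_cons, List.filter_append, List.length_append]
    have htail : ((termPositionsList (pre.length + 1) cs).filter
        (fun q => canon (removeAt (node (pre ++ c :: cs)) q) = node es)).length
        = (cs.map (gRem (↑(pre ++ c :: cs)) (↑es))).sum := by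
      have := ih (pre ++ [c]) (pre ++ c :: cs) (by simp) hcan
      simpa using this
    have hhead : (((termPositions c).map (fun p => pre.length :: p)).filter
        (fun q => canon (removeAt (node (pre ++ c :: cs)) q) = node es)).length
        = gRem (↑(pre ++ c :: cs)) (↑es) c := by
      by_cases hcl : c = leaf
      · subst hcl
        rw [termPositions_leaf, gRem_leaf, hE]
        have hrm : removeAt (node (pre ++ leaf :: cs)) [pre.length]
            = node (pre ++ cs) := by
          rw [removeAt_single, eraseIdx_append]
        have hcanon : canon (node (pre ++ cs)) = node es
            ↔ (↑(pre ++ cs) : Multiset PreTree) = ↑es := by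
          rw [canon_node_eq_iff hes, List.map_append, map_canon_of_canonical hcpre,
            map_canon_of_canonical hccs]
        simp only [List.map_cons, List.map_nil, List.filter_cons, List.filter_nil, hrm]
        by_cases hcond : (↑(pre ++ cs) : Multiset PreTree) = ↑es
        · rw [if_pos (by simpa [decide_eq_true_eq] using hcanon.mpr hcond),
            if_pos hcond]
          simp
        · rw [if_neg (by simpa [decide_eq_true_eq] using fun h => hcond (hcanon.mp h)),
            if_neg hcond]
          simp
      · have hiff : ∀ p ∈ termPositions c,
            (canon (removeAt (node (pre ++ c :: cs)) (pre.length :: p)) = node es)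
            ↔ (canon (removeAt c p) ::ₘ (↑(pre ++ cs) : Multiset PreTree) = ↑es) := by
          intro p hp
          rw [removeAt_cons _ _ _ (ne_nil_of_mem_termPositions hcl hp),
            removeAtList_append, canon_node_eq_iff hes,
            List.map_append, List.map_cons, map_canon_of_canonical hcpre,
            map_canon_of_canonical hccs, coe_middle]
        rw [List.filter_map, List.length_map]
        by_cases hy : ∃ y, ((↑(pre ++ c :: cs) : Multiset PreTree)).erase c + {y} = ↑es
        · obtain ⟨y, hy'⟩ := hy
          rw [gRem_eq hcl hy']
          rw [hE] at hy'
          have hy'' : y ::ₘ (↑(pre ++ cs) : Multiset PreTree) = ↑es := by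
            rw [← Multiset.singleton_add, add_comm]; exact hy'
          show _ = ((termPositions c).filter (fun p => canon (removeAt c p) = y)).length
          congr 1
          apply List.filter_congr
          intro p hp
          simp only [Function.comp_apply, decide_eq_decide]
          rw [hiff p hp, ← hy'', Multiset.cons_inj_left]
        · rw [gRem_eq_zero hcl hy]
          rw [List.length_eq_zero_iff, List.filter_eq_nil_iff]
          intro p hp hcontra
          simp only [Function.comp_apply, decide_eq_true_eq] at hcontra
          rw [hiff p hp] at hcontra
          exact hy ⟨canon (removeAt c p), by
            rw [hE, add_comm]; rw [← Multiset.singleton_add] at hcontra; exact hcontra⟩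
    rw [hhead, htail, List.map_cons, List.sum_cons]

/-- Main counting formula for `ncoef`. -/
theorem ncoef_formula {cs ds : List PreTree} (ht : Canonical (node cs))
    (hs : Canonical (node ds)) :
    ncoef (node cs) (node ds)
      = (if (↑cs + {leaf} : Multiset PreTree) = ↑ds then 1 else 0)
        + (cs.map (gAdd (↑cs) (↑ds))).sum := by
  have hccs : ∀ x ∈ cs, Canonical x := ht.children
  have hroot : (canon (addLeafAt (node cs) []) = node ds)
      ↔ ((↑cs + {leaf} : Multiset PreTree) = ↑ds) := by
    rw [addLeafAt_nil, canon_node_eq_iff hs, List.map_append,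
      map_canon_of_canonical hccs, List.map_cons, List.map_nil, canon_leaf,
      ← Multiset.coe_add, Multiset.coe_singleton]
  show ((positions (node cs)).filter
      (fun q => canon (addLeafAt (node cs) q) = node ds)).length = _
  rw [positions_node, List.filter_cons]
  have hmain := count_addList hs cs [] cs rfl hccs
  simp only [List.length_nil] at hmain
  by_cases hcond : (↑cs + {leaf} : Multiset PreTree) = ↑ds
  · rw [if_pos (by simpa [decide_eq_true_eq] using hroot.mpr hcond), if_pos hcond,
      List.length_cons, hmain]
    omega
  · rw [if_neg (by simpa [decide_eq_true_eq] using fun h => hcond (hroot.mp h)),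
      if_neg hcond, hmain]
    omega

/-- Main counting formula for `mcoef`. -/
theorem mcoef_formula {es ds : List PreTree} (ht : Canonical (node es))
    (hs : Canonical (node ds)) (hds : ds ≠ []) :
    mcoef (node es) (node ds) = (ds.map (gRem (↑ds) (↑es))).sum := by
  obtain ⟨d, ds', rfl⟩ := List.exists_cons_of_ne_nil hds
  show ((termPositions (node (d :: ds'))).filter
      (fun q => canon (removeAt (node (d :: ds')) q) = node es)).length = _
  rw [termPositions_node_cons]
  have := count_remList ht (d :: ds') [] (d :: ds') rfl hs.children
  simpa using this

end PreTree

namespace PreTree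

theorem sgOrder_node (cs : List PreTree) :
    sgOrder (node cs) = sgOrderList cs *
      ((canonList cs).dedup.map (fun c => Nat.factorial ((canonList cs).count c))).prod := by
  simp [sgOrder]

theorem sgOrderList_nil : sgOrderList [] = 1 := by simp [sgOrderList]

theorem sgOrderList_cons (t : PreTree) (ts : List PreTree) :
    sgOrderList (t :: ts) = sgOrder t * sgOrderList ts := by simp [sgOrderList]

theorem sgOrderList_eq_prod (l : List PreTree) : sgOrderList l = (l.map sgOrder).prod := by
  induction l with
  | nil => simp [sgOrderList_nil]
  | cons t ts ih => simp [sgOrderList_cons, ih]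

mutual
theorem sgOrder_pos : (t : PreTree) → 0 < sgOrder t
  | .node cs => by
    rw [sgOrder_node]
    refine Nat.mul_pos (sgOrderList_pos cs) (List.prod_pos ?_)
    intro a ha
    obtain ⟨c, _, rfl⟩ := List.mem_map.mp ha
    exact Nat.factorial_pos _
theorem sgOrderList_pos : (l : List PreTree) → 0 < sgOrderList l
  | [] => by rw [sgOrderList_nil]; omega
  | t :: ts => by
    rw [sgOrderList_cons]; exact Nat.mul_pos (sgOrder_pos t) (sgOrderList_pos ts)
end

/-- The factorial product `∏_c (count c)!` over the distinct elements of a multiset. -/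
def Fm (M : Multiset PreTree) : ℕ := ∏ c ∈ M.toFinset, (M.count c).factorial

/-- The symmetry-group order expressed in terms of the multiset of (canonical) children. -/
def sgM (M : Multiset PreTree) : ℕ := (M.map sgOrder).prod * Fm M

theorem Fm_cons (x : PreTree) (M : Multiset PreTree) :
    Fm (x ::ₘ M) = (M.count x + 1) * Fm M := by
  classical
  by_cases hx : x ∈ M
  · have hxS : x ∈ M.toFinset := Multiset.mem_toFinset.mpr hx
    have htf : (x ::ₘ M).toFinset = M.toFinset := by
      rw [Multiset.toFinset_cons, Finset.insert_eq_self.mpr hxS]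
    rw [Fm, Fm, htf, ← Finset.mul_prod_erase _ _ hxS,
      ← Finset.mul_prod_erase _ (fun c => (M.count c).factorial) hxS,
      Multiset.count_cons_self, Nat.factorial_succ]
    have h2 : ∀ c ∈ M.toFinset.erase x,
        ((x ::ₘ M).count c).factorial = (M.count c).factorial := by
      intro c hc
      rw [Multiset.count_cons_of_ne (Finset.ne_of_mem_erase hc)]
    rw [Finset.prod_congr rfl h2]
    ring
  · have hxS : x ∉ M.toFinset := fun h => hx (Multiset.mem_toFinset.mp h)
    have hcnt : M.count x = 0 := Multiset.count_eq_zero.mpr hx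
    rw [Fm, Fm, Multiset.toFinset_cons, Finset.prod_insert hxS,
      Multiset.count_cons_self, hcnt]
    have h2 : ∀ c ∈ M.toFinset,
        ((x ::ₘ M).count c).factorial = (M.count c).factorial := by
      intro c hc
      rw [Multiset.count_cons_of_ne (by rintro rfl; exact hxS hc)]
    rw [Finset.prod_congr rfl h2]
    simp

theorem sgM_cons (x : PreTree) (M : Multiset PreTree) :
    sgM (x ::ₘ M) = sgOrder x * ((M.count x + 1) * sgM M) := by
  rw [sgM, sgM, Multiset.map_cons, Multiset.prod_cons, Fm_cons]
  ring

theorem sgOrder_node_canonical {cs : List PreTree} (h : Canonical (node cs)) :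
    sgOrder (node cs) = sgM (↑cs) := by
  rw [sgOrder_node, canonList_eq_map, map_canon_of_canonical h.children, sgM]
  congr 1
  · rw [sgOrderList_eq_prod, Multiset.map_coe, Multiset.prod_coe]
  · rw [Fm, Finset.prod_eq_multiset_prod, Multiset.toFinset_val, Multiset.coe_dedup]
    rw [Multiset.map_coe, Multiset.prod_coe]
    congr 1
    apply List.map_congr_left
    intro c _
    rw [Multiset.coe_count]

theorem sgOrder_leaf : sgOrder leaf = 1 := by
  rw [leaf, sgOrder_node, sgOrderList_nil]
  simp [canonList]

/- Sum helpers. -/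

theorem list_sum_map_zero {g : PreTree → ℕ} {l : List PreTree}
    (h : ∀ c ∈ l, g c = 0) : (l.map g).sum = 0 := by
  apply List.sum_eq_zero
  intro x hx
  obtain ⟨c, hc, rfl⟩ := List.mem_map.mp hx
  exact h c hc

theorem list_sum_map_ite {g : PreTree → ℕ} {l : List PreTree} {a : PreTree} {v : ℕ}
    (h : ∀ c ∈ l, g c = if c = a then v else 0) :
    (l.map g).sum = l.count a * v := by
  induction l with
  | nil => simp
  | cons c cs ih =>
    rw [List.map_cons, List.sum_cons, ih (fun d hd => h d (List.mem_cons_of_mem _ hd)),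
      h c (List.mem_cons_self), List.count_cons]
    by_cases hca : c = a
    · subst hca; simp [Nat.add_mul]; ring
    · have : (c == a) = false := beq_false_of_ne hca
      simp [hca, this]

end PreTree

namespace PreTree

theorem keyL : ∀ N : ℕ, ∀ t s : PreTree, size t = N → Canonical t → Canonical s →
    size s = size t + 1 → mcoef t s * sgOrder t = ncoef t s * sgOrder s := by
  intro N
  induction N using Nat.strong_induction_on with
  | _ N IH =>
  intro t s hN ht hs hsz
  obtain ⟨cs⟩ := t
  obtain ⟨ds⟩ := s
  have hds_ne : ds ≠ [] := by
    intro h; subst h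
    have h1 := one_le_size (node cs)
    rw [size_node, sizeList_nil] at hsz
    omega
  rw [ncoef_formula ht hs, mcoef_formula ht hs hds_ne,
    sgOrder_node_canonical ht, sgOrder_node_canonical hs]
  have hsum : ((↑ds : Multiset PreTree).map size).sum
      = ((↑cs : Multiset PreTree).map size).sum + 1 := by
    rw [Multiset.map_coe, Multiset.map_coe, Multiset.sum_coe, Multiset.sum_coe]
    rw [size_node, size_node, sizeList_eq_sum, sizeList_eq_sum] at hsz
    omega
  have hcardMD : Multiset.card (↑ds : Multiset PreTree)
      = Multiset.card (↑cs : Multiset PreTree) + 1 → True := fun _ => trivial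
  by_cases hA : (↑cs : Multiset PreTree) + {leaf} = (↑ds : Multiset PreTree)
  · -- Case A : s is t with a new leaf attached at the root
    have hDld : (↑ds : Multiset PreTree) = leaf ::ₘ (↑cs : Multiset PreTree) := by
      rw [← hA, add_comm, Multiset.singleton_add]
    have hcard : Multiset.card (↑ds : Multiset PreTree)
        = Multiset.card (↑cs : Multiset PreTree) + 1 := by
      rw [hDld, Multiset.card_cons]
    have hn0 : (cs.map (gAdd (↑cs) (↑ds))).sum = 0 := by
      apply list_sum_map_zero
      intro c hc
      apply gAdd_eq_zero
      rintro ⟨x, hx⟩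
      have hcM : c ∈ (↑cs : Multiset PreTree) := Multiset.mem_coe.mpr hc
      have hcpos : 0 < Multiset.card (↑cs : Multiset PreTree) :=
        Multiset.card_pos_iff_exists_mem.mpr ⟨c, hcM⟩
      have h1 := congrArg Multiset.card hx
      rw [Multiset.card_add, Multiset.card_singleton,
        Multiset.card_erase_of_mem hcM, Nat.pred_eq_sub_one] at h1
      omega
    have hm : (ds.map (gRem (↑ds) (↑cs))).sum = ds.count leaf * 1 := by
      apply list_sum_map_ite
      intro d hd
      by_cases hdl : d = leaf
      · subst hdl
        rw [gRem_leaf, if_pos rfl, if_pos]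
        rw [hDld, Multiset.erase_cons_head]
      · rw [if_neg hdl]
        apply gRem_eq_zero hdl
        rintro ⟨y, hy⟩
        have hdD : d ∈ (↑ds : Multiset PreTree) := Multiset.mem_coe.mpr hd
        have h1 := congrArg Multiset.card hy
        rw [Multiset.card_add, Multiset.card_singleton,
          Multiset.card_erase_of_mem hdD, Nat.pred_eq_sub_one, hcard] at h1
        have hcpos : 0 < Multiset.card (↑ds : Multiset PreTree) :=
          Multiset.card_pos_iff_exists_mem.mpr ⟨d, hdD⟩
        omega
    have hcount : ds.count leaf = (↑cs : Multiset PreTree).count leaf + 1 := by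
      have h1 : (↑ds : Multiset PreTree).count leaf
          = (↑cs : Multiset PreTree).count leaf + 1 := by
        rw [hDld, Multiset.count_cons_self]
      rw [← Multiset.coe_count]
      exact h1
    rw [hn0, hm, hcount, if_pos hA, hDld, sgM_cons, sgOrder_leaf]
    ring
  · by_cases hex : ∃ c x, c ∈ (↑cs : Multiset PreTree) ∧
        (↑cs : Multiset PreTree).erase c + {x} = (↑ds : Multiset PreTree)
    · -- Case B : s is t with a leaf added inside a child c, giving x
      obtain ⟨c, x, hcM, hcx⟩ := hex
      have hDx : (↑ds : Multiset PreTree) = x ::ₘ (↑cs : Multiset PreTree).erase c := by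
        rw [← hcx, add_comm, Multiset.singleton_add]
      have hxD : x ∈ (↑ds : Multiset PreTree) := by
        rw [hDx]; exact Multiset.mem_cons_self _ _
      have ha : 0 < (↑cs : Multiset PreTree).count c := Multiset.count_pos.mpr hcM
      have hszx : size x = size c + 1 := by
        have h1 : ((↑ds : Multiset PreTree).map size).sum
            = size x + (((↑cs : Multiset PreTree).erase c).map size).sum := by
          rw [hDx, Multiset.map_cons, Multiset.sum_cons]
        have h2 : ((↑cs : Multiset PreTree).map size).sum
            = size c + (((↑cs : Multiset PreTree).erase c).map size).sum := by
          conv_lhs => rw [← Multiset.cons_erase hcM]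
          rw [Multiset.map_cons, Multiset.sum_cons]
        omega
      have hxc : x ≠ c := by intro h; rw [h] at hszx; omega
      have hxleaf : x ≠ leaf := by
        intro h
        rw [h, size_leaf] at hszx
        have := one_le_size c
        omega
      have hcC : Canonical c := ht.children c (Multiset.mem_coe.mp hcM)
      have hxC : Canonical x := hs.children x (Multiset.mem_coe.mp hxD)
      have hIH : mcoef c x * sgOrder c = ncoef c x * sgOrder x := by
        refine IH (size c) ?_ c x rfl hcC hxC hszx
        have h1 : size c ≤ ((↑cs : Multiset PreTree).map size).sum := by
          apply Multiset.single_le_sum (fun y _ => Nat.zero_le y)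
          exact Multiset.mem_map_of_mem size hcM
        rw [size_node, sizeList_eq_sum] at hN
        have h2 : ((↑cs : Multiset PreTree).map size).sum = (cs.map size).sum := by
          rw [Multiset.map_coe, Multiset.sum_coe]
        omega
      have hn : (cs.map (gAdd (↑cs) (↑ds))).sum = cs.count c * ncoef c x := by
        apply list_sum_map_ite
        intro c' hc'
        by_cases hcc : c' = c
        · subst hcc; rw [if_pos rfl]; exact gAdd_eq hcx
        · rw [if_neg hcc]
          apply gAdd_eq_zero
          rintro ⟨x', hx'⟩
          have h1 := congrArg (Multiset.count c) (hx'.trans hcx.symm)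
          rw [Multiset.count_add, Multiset.count_add,
            Multiset.count_erase_of_ne (fun h => hcc h.symm),
            Multiset.count_erase_self, Multiset.count_singleton,
            Multiset.count_singleton] at h1
          rw [if_neg (show ¬ c = x from fun h => hxc h.symm)] at h1
          split_ifs at h1 <;> omega
      have hm : (ds.map (gRem (↑ds) (↑cs))).sum = ds.count x * mcoef c x := by
        apply list_sum_map_ite
        intro d hd
        have hdD : d ∈ (↑ds : Multiset PreTree) := Multiset.mem_coe.mpr hd
        by_cases hdx : d = x
        · subst hdx; rw [if_pos rfl]
          apply gRem_eq hxleaf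
          rw [hDx, Multiset.erase_cons_head, add_comm, Multiset.singleton_add,
            Multiset.cons_erase hcM]
        · rw [if_neg hdx]
          by_cases hdl : d = leaf
          · subst hdl
            rw [gRem_leaf, if_neg]
            intro hDe
            apply hA
            have hDeq : (↑ds : Multiset PreTree) = leaf ::ₘ (↑cs : Multiset PreTree) := by
              rw [← hDe, Multiset.cons_erase hdD]
            rw [hDeq, add_comm, Multiset.singleton_add]
          · apply gRem_eq_zero hdl
            rintro ⟨y, hy⟩
            have h1 := congrArg (Multiset.count x) hy
            rw [Multiset.count_add,
              Multiset.count_erase_of_ne (fun h => hdx h.symm),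
              Multiset.count_singleton] at h1
            have hbD : (↑ds : Multiset PreTree).count x
                = (↑cs : Multiset PreTree).count x + 1 := by
              rw [hDx, Multiset.count_cons_self, Multiset.count_erase_of_ne hxc]
            rw [hbD] at h1
            split_ifs at h1 <;> omega
      have hacnt : cs.count c = (↑cs : Multiset PreTree).count c :=
        (Multiset.coe_count c cs).symm
      have hdcnt : ds.count x = (↑cs : Multiset PreTree).count x + 1 := by
        rw [← Multiset.coe_count, hDx, Multiset.count_cons_self,
          Multiset.count_erase_of_ne hxc]
      have hsgt : sgM (↑cs) = sgOrder c *
          ((↑cs : Multiset PreTree).count c * sgM ((↑cs : Multiset PreTree).erase c)) := by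
        conv_lhs => rw [← Multiset.cons_erase hcM]
        rw [sgM_cons, Multiset.count_erase_self]
        congr 2
        omega
      have hsgs : sgM (↑ds) = sgOrder x *
          (((↑cs : Multiset PreTree).count x + 1) * sgM ((↑cs : Multiset PreTree).erase c)) := by
        rw [hDx, sgM_cons, Multiset.count_erase_of_ne hxc]
      rw [hn, hm, hacnt, hdcnt, hsgt, hsgs, if_neg hA]
      calc ((↑cs : Multiset PreTree).count x + 1) * mcoef c x *
            (sgOrder c * ((↑cs : Multiset PreTree).count c * sgM ((↑cs : Multiset PreTree).erase c)))
          = ((↑cs : Multiset PreTree).count c * (((↑cs : Multiset PreTree).count x + 1) *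
              sgM ((↑cs : Multiset PreTree).erase c))) * (mcoef c x * sgOrder c) := by ring
        _ = ((↑cs : Multiset PreTree).count c * (((↑cs : Multiset PreTree).count x + 1) *
              sgM ((↑cs : Multiset PreTree).erase c))) * (ncoef c x * sgOrder x) := by rw [hIH]
        _ = (0 + (↑cs : Multiset PreTree).count c * ncoef c x) *
            (sgOrder x * (((↑cs : Multiset PreTree).count x + 1) *
              sgM ((↑cs : Multiset PreTree).erase c))) := by ring
    · -- Case C : both coefficients vanish
      have hn0 : (cs.map (gAdd (↑cs) (↑ds))).sum = 0 := by
        apply list_sum_map_zero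
        intro c hc
        apply gAdd_eq_zero
        rintro ⟨x, hx⟩
        exact hex ⟨c, x, Multiset.mem_coe.mpr hc, hx⟩
      have hm0 : (ds.map (gRem (↑ds) (↑cs))).sum = 0 := by
        apply list_sum_map_zero
        intro d hd
        have hdD : d ∈ (↑ds : Multiset PreTree) := Multiset.mem_coe.mpr hd
        by_cases hdl : d = leaf
        · subst hdl
          rw [gRem_leaf, if_neg]
          intro hDe
          apply hA
          have hDeq : (↑ds : Multiset PreTree) = leaf ::ₘ (↑cs : Multiset PreTree) := by
            rw [← hDe, Multiset.cons_erase hdD]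
          rw [hDeq, add_comm, Multiset.singleton_add]
        · apply gRem_eq_zero hdl
          rintro ⟨y, hy⟩
          apply hex
          have hyM : y ∈ (↑cs : Multiset PreTree) := by
            rw [← hy]
            exact Multiset.mem_add.mpr (Or.inr (Multiset.mem_singleton_self y))
          refine ⟨y, d, hyM, ?_⟩
          have hMy : (↑cs : Multiset PreTree) = y ::ₘ (↑ds : Multiset PreTree).erase d := by
            rw [← hy, add_comm, Multiset.singleton_add]
          rw [hMy, Multiset.erase_cons_head, add_comm, Multiset.singleton_add,
            Multiset.cons_erase hdD]
      rw [hn0, hm0, if_neg hA]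
      simp

end PreTree

namespace PreTree

theorem treeList_one : treeList 1 = [leaf] := by simp [treeList]

theorem treeList_succ_succ (n : ℕ) :
    treeList (n + 2) = ((treeList (n + 1)).flatMap
      (fun t => (positions t).map (fun p => canon (addLeafAt t p)))).dedup := by
  simp [treeList]

theorem nGen_zero (t t' : PreTree) : nGen 0 t t' = if t = t' then 1 else 0 := by simp [nGen]

theorem nGen_succ (k : ℕ) (t t' : PreTree) :
    nGen (k + 1) t t' = ((treeList (t.size + k)).map (fun s => nGen k t s * ncoef s t')).sum := by
  simp [nGen]

theorem mGen_zero (t t' : PreTree) : mGen 0 t t' = if t = t' then 1 else 0 := by simp [mGen]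

theorem mGen_succ (k : ℕ) (t t' : PreTree) :
    mGen (k + 1) t t' = ((treeList (t'.size - 1)).map (fun s => mcoef s t' * mGen k t s)).sum := by
  simp [mGen]

theorem nWt_def (t : PreTree) : nWt t = nGen (t.size - 1) leaf t := rfl

theorem mWt_def (t : PreTree) : mWt t = mGen (t.size - 1) leaf t := rfl

theorem nWt_leaf : nWt leaf = 1 := by
  rw [nWt_def, size_leaf]
  simp [nGen_zero]

theorem mWt_leaf : mWt leaf = 1 := by
  rw [mWt_def, size_leaf]
  simp [mGen_zero]

theorem sizeList_append (a b : List PreTree) :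
    sizeList (a ++ b) = sizeList a + sizeList b := by
  rw [sizeList_eq_sum, sizeList_eq_sum, sizeList_eq_sum, List.map_append, List.sum_append]

theorem mem_positionsList : ∀ (L : List PreTree) (j : ℕ) (q : List ℕ),
    q ∈ positionsList j L → ∃ pre c post p, L = pre ++ c :: post ∧ p ∈ positions c ∧
      q = (j + pre.length) :: p := by
  intro L
  induction L with
  | nil => intro j q hq; rw [positionsList_nil] at hq; cases hq
  | cons c cs ih =>
    intro j q hq
    rw [positionsList_cons, List.mem_append] at hq
    rcases hq with hq | hq
    · obtain ⟨p, hp, rfl⟩ := List.mem_map.mp hq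
      exact ⟨[], c, cs, p, rfl, hp, by simp⟩
    · obtain ⟨pre, c', post, p, hL, hp, hqe⟩ := ih (j + 1) q hq
      refine ⟨c :: pre, c', post, p, by rw [hL]; simp, hp, ?_⟩
      rw [hqe]
      congr 1
      simp
      omega

theorem size_addLeafAt : ∀ N t p, size t = N → p ∈ positions t →
    size (addLeafAt t p) = size t + 1 := by
  intro N
  induction N using Nat.strong_induction_on with
  | _ N IH =>
  intro t p hN hp
  obtain ⟨cs⟩ := t
  rw [positions_node] at hp
  rcases List.mem_cons.mp hp with rfl | hp
  · rw [addLeafAt_nil, size_node, size_node, sizeList_append, sizeList_cons,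
      sizeList_nil, size_leaf]
    omega
  · obtain ⟨pre, c, post, p', hL, hp', rfl⟩ := mem_positionsList cs 0 p hp
    subst hL
    have hzl : 0 + pre.length = pre.length := by omega
    rw [hzl, addLeafAt_cons, addLeafAtList_append]
    have hszc : size c < N := by
      rw [← hN, size_node, sizeList_append, sizeList_cons]
      have := one_le_size c
      omega
    have hrec := IH (size c) hszc c p' rfl hp'
    rw [size_node, size_node, sizeList_append, sizeList_append,
      sizeList_cons, sizeList_cons, hrec]
    omega

theorem list_single_le_sum {l : List ℕ} {a : ℕ} (h : a ∈ l) : a ≤ l.sum := by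
  have : a ≤ (↑l : Multiset ℕ).sum :=
    Multiset.single_le_sum (fun x _ => Nat.zero_le x) a (Multiset.mem_coe.mpr h)
  rwa [Multiset.sum_coe] at this

theorem list_sum_mul_right (l : List PreTree) (f : PreTree → ℕ) (c : ℕ) :
    (l.map (fun s => f s * c)).sum = (l.map f).sum * c := by
  induction l with
  | nil => simp
  | cons a l ih => simp [ih, Nat.add_mul]

/-- Canonicity, size and positivity of the growth weight for members of `treeList`. -/
theorem treeList_spec : ∀ n, 1 ≤ n → ∀ t ∈ treeList n,
    Canonical t ∧ size t = n ∧ 0 < nWt t := by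
  intro n
  induction n using Nat.strong_induction_on with
  | _ n IH =>
  match n with
  | 0 => intro h; omega
  | 1 =>
    intro _ t ht
    rw [treeList_one, List.mem_singleton] at ht
    subst ht
    refine ⟨canonical_leaf, size_leaf, ?_⟩
    rw [nWt_leaf]; omega
  | (m + 2) =>
    intro _ t' ht'
    rw [treeList_succ_succ, List.mem_dedup, List.mem_flatMap] at ht'
    obtain ⟨t, htm, ht'2⟩ := ht'
    obtain ⟨p, hp, rfl⟩ := List.mem_map.mp ht'2
    obtain ⟨htc, hts, htn⟩ := IH (m + 1) (by omega) (by omega) t htm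
    have hsz : size (canon (addLeafAt t p)) = m + 2 := by
      rw [size_canon, size_addLeafAt (size t) t p rfl hp, hts]
    refine ⟨canonical_canon _, hsz, ?_⟩
    rw [nWt_def, hsz]
    have heq : m + 2 - 1 = m + 1 := by omega
    rw [heq, nGen_succ]
    have hsl : leaf.size + m = m + 1 := by rw [size_leaf]; omega
    rw [hsl]
    have hnt : nGen m leaf t = nWt t := by
      rw [nWt_def, hts, Nat.add_sub_cancel]
    have hncoef : 0 < ncoef t (canon (addLeafAt t p)) := by
      have hmemf : p ∈ (positions t).filter
          (fun q => canon (addLeafAt t q) = canon (addLeafAt t p)) :=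
        List.mem_filter.mpr ⟨hp, by simp⟩
      exact List.length_pos_iff.mpr (List.ne_nil_of_mem hmemf)
    have hmem : nGen m leaf t * ncoef t (canon (addLeafAt t p))
        ∈ (treeList (m + 1)).map
          (fun s => nGen m leaf s * ncoef s (canon (addLeafAt t p))) :=
      List.mem_map_of_mem htm
    have hle := list_single_le_sum hmem
    have hpos : 0 < nGen m leaf t * ncoef t (canon (addLeafAt t p)) := by
      rw [hnt]
      exact Nat.mul_pos htn hncoef
    omega

/-- `m(t) = n(t) · |SG(t)|` for canonical trees in `treeList`. -/
theorem mWt_eq_nWt_mul_sg : ∀ n, 1 ≤ n → ∀ t ∈ treeList n,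
    mWt t = nWt t * sgOrder t := by
  intro n
  induction n using Nat.strong_induction_on with
  | _ n IH =>
  match n with
  | 0 => intro h; omega
  | 1 =>
    intro _ t ht
    rw [treeList_one, List.mem_singleton] at ht
    subst ht
    rw [mWt_leaf, nWt_leaf, sgOrder_leaf]
  | (m + 2) =>
    intro _ t ht
    obtain ⟨htc, hts, _⟩ := treeList_spec (m + 2) (by omega) t ht
    have h1 : mWt t = ((treeList (m + 1)).map
        (fun s => mcoef s t * mGen m leaf s)).sum := by
      rw [mWt_def, hts]
      have h2 : m + 2 - 1 = m + 1 := by omega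
      rw [h2, mGen_succ, hts, h2]
    have h3 : nWt t = ((treeList (m + 1)).map
        (fun s => nGen m leaf s * ncoef s t)).sum := by
      rw [nWt_def, hts]
      have h2 : m + 2 - 1 = m + 1 := by omega
      rw [h2, nGen_succ]
      have hsl : leaf.size + m = m + 1 := by rw [size_leaf]; omega
      rw [hsl]
    have hcong : (treeList (m + 1)).map (fun s => mcoef s t * mGen m leaf s)
        = (treeList (m + 1)).map (fun s => nGen m leaf s * ncoef s t * sgOrder t) := by
      apply List.map_congr_left
      intro s hsm
      obtain ⟨hsc, hss, _⟩ := treeList_spec (m + 1) (by omega) s hsm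
      have hms : mGen m leaf s = mWt s := by rw [mWt_def, hss, Nat.add_sub_cancel]
      have hns : nGen m leaf s = nWt s := by rw [nWt_def, hss, Nat.add_sub_cancel]
      rw [hms, hns, IH (m + 1) (by omega) (by omega) s hsm]
      have hkey := keyL (size s) s t rfl hsc htc (by omega)
      calc mcoef s t * (nWt s * sgOrder s)
          = nWt s * (mcoef s t * sgOrder s) := by ring
        _ = nWt s * (ncoef s t * sgOrder t) := by rw [hkey]
        _ = nWt s * ncoef s t * sgOrder t := by ring
    rw [h1, hcong, h3, list_sum_mul_right]

theorem mWt_pos {n : ℕ} (hn : 1 ≤ n) {t : PreTree} (ht : t ∈ treeList n) :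
    0 < mWt t := by
  obtain ⟨_, _, hnwt⟩ := treeList_spec n hn t ht
  rw [mWt_eq_nWt_mul_sg n hn t ht]
  exact Nat.mul_pos hnwt (sgOrder_pos t)

end PreTree

open PreTree in
/-- `DU_n = (1/C(n+1,2)) · A P G A⁻¹` where `A` is the diagonal
operator `t ↦ m(t)·t`; entrywise, for all `t, t' ∈ 𝒯_n`,
`DU_n(t,t') = (m(t')/(C(n+1,2) m(t))) · Σ_{s : s ⋗ t, s ⋗ t'} n(t,s) m(t',s)`. -/
theorem DU_eq_APGAinv (n : ℕ) (hn : 1 ≤ n) (t t' : PreTree)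
    (ht : t ∈ trees n) (ht' : t' ∈ trees n) :
    DU n t t' = (mWt t' : ℚ) / ((Nat.choose (n + 1) 2 : ℚ) * (mWt t : ℚ))
      * ∑ s ∈ trees (n + 1), ((ncoef t s * mcoef t' s : ℕ) : ℚ) := by
  have htl : t ∈ treeList n := List.mem_toFinset.mp ht
  have htl' : t' ∈ treeList n := List.mem_toFinset.mp ht'
  obtain ⟨htc, hts, htn⟩ := treeList_spec n hn t htl
  obtain ⟨htc', hts', htn'⟩ := treeList_spec n hn t' htl'
  have hmt : 0 < mWt t := mWt_pos hn htl
  have hmt' : 0 < mWt t' := mWt_pos hn htl'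
  have hC : 0 < Nat.choose (n + 1) 2 := Nat.choose_pos (by omega)
  rw [DU, Finset.mul_sum]
  apply Finset.sum_congr rfl
  intro s hs
  have hsl : s ∈ treeList (n + 1) := List.mem_toFinset.mp hs
  obtain ⟨hsc, hss, hsn⟩ := treeList_spec (n + 1) (by omega) s hsl
  have hms : 0 < mWt s := mWt_pos (by omega) hsl
  have hkeyt : mcoef t s * nWt s * mWt t = ncoef t s * nWt t * mWt s := by
    rw [mWt_eq_nWt_mul_sg n hn t htl, mWt_eq_nWt_mul_sg (n + 1) (by omega) s hsl]
    have hk := keyL (size t) t s rfl htc hsc (by omega)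
    calc mcoef t s * nWt s * (nWt t * sgOrder t)
        = nWt s * nWt t * (mcoef t s * sgOrder t) := by ring
      _ = nWt s * nWt t * (ncoef t s * sgOrder s) := by rw [hk]
      _ = ncoef t s * nWt t * (nWt s * sgOrder s) := by ring
  have hkeyQ : (mcoef t s : ℚ) * nWt s * mWt t = ncoef t s * nWt t * mWt s := by
    exact_mod_cast hkeyt
  rw [Pu, Pd]
  have h1 : (nWt t : ℚ) ≠ 0 := Nat.cast_ne_zero.mpr (by omega)
  have h2 : (mWt t : ℚ) ≠ 0 := Nat.cast_ne_zero.mpr (by omega)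
  have h3 : (mWt s : ℚ) ≠ 0 := Nat.cast_ne_zero.mpr (by omega)
  have h4 : ((Nat.choose (n + 1) 2 : ℕ) : ℚ) ≠ 0 := Nat.cast_ne_zero.mpr (by omega)
  push_cast
  field_simp
  linear_combination (mcoef t' s : ℚ) * hkeyQ

end RootedTreeChain
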